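/- Let (X, ρ) be a probability space with a jointly measurable measure-preserving semiflow (σ_τ)_{τ≥0}, and let E ⊆ X be measurable. Let S_E⁺ be the set of x for which the mean sojourn time in E exists and is positive, and S_E⁰ the set where it exists and equals 0. Then the function x ↦ lim_{T→∞} (1/T)∫₀^T χ_{E \ S_E⁺}(σ_t x) dt vanishes ρ-almost everywhere on S_E⁰ ∪ S_E⁺, and consequently ρ(E \ S_E⁺) = 0. -/

import Mathlib

open MeasureTheory Filter Set

namespace Stmt18Aux

/-- bounded measurable functions are interval integrable -/
lemma ii {h : ℝ → ℝ} (hm : Measurable h) (h0 : ∀ t, 0 ≤ h t) (h1 : ∀ t, h t ≤ 1)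
    (a b : ℝ) : IntervalIntegrable h volume a b := by
  refine ⟨?_, ?_⟩ <;>
  · refine (integrable_const (1:ℝ)).mono' hm.aestronglyMeasurable ?_
    refine Eventually.of_forall fun t => ?_
    rw [Real.norm_eq_abs, abs_of_nonneg (h0 t)]
    exact h1 t

/-- monotone-type bound: ∫ h over a..b is between 0 and b - a -/
lemma int_bounds {h : ℝ → ℝ} (hm : Measurable h) (h0 : ∀ t, 0 ≤ h t) (h1 : ∀ t, h t ≤ 1)
    {a b : ℝ} (hab : a ≤ b) :
    0 ≤ (∫ t in a..b, h t) ∧ (∫ t in a..b, h t) ≤ b - a := by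
  constructor
  · exact intervalIntegral.integral_nonneg hab fun t _ => h0 t
  · have := intervalIntegral.integral_mono_on hab (ii hm h0 h1 a b)
      intervalIntegrable_const (fun t _ => h1 t)
    simpa using this

/-- if the averages along ℕ tend to ℓ, the averages along ℝ tend to ℓ -/
lemma nat_to_real {h : ℝ → ℝ} (hm : Measurable h) (h0 : ∀ t, 0 ≤ h t) (h1 : ∀ t, h t ≤ 1)
    {ℓ : ℝ}
    (hn : Tendsto (fun n : ℕ => (1 / (n:ℝ)) * ∫ t in (0:ℝ)..(n:ℝ), h t) atTop (nhds ℓ)) :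
    Tendsto (fun T : ℝ => (1 / T) * ∫ t in (0:ℝ)..T, h t) atTop (nhds ℓ) := by
  set u : ℝ → ℝ := fun T => ∫ t in (0:ℝ)..T, h t with hu
  -- main part: (1/T) * u ⌊T⌋₊ → ℓ
  have h1' : Tendsto (fun T : ℝ => (1 / T) * u (⌊T⌋₊ : ℝ)) atTop (nhds ℓ) := by
    have hfl : Tendsto (fun T : ℝ => (1 / (⌊T⌋₊:ℝ)) * u (⌊T⌋₊ : ℝ)) atTop (nhds ℓ) :=
      hn.comp tendsto_nat_floor_atTop
    have hdiv : Tendsto (fun T : ℝ => (⌊T⌋₊ : ℝ) / T) atTop (nhds 1) :=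
      tendsto_nat_floor_div_atTop
    have := hfl.mul hdiv
    rw [mul_one] at this
    refine this.congr' ?_
    filter_upwards [eventually_ge_atTop (1:ℝ)] with T hT
    have h0T : (0:ℝ) < T := lt_of_lt_of_le one_pos hT
    have hfl1 : (1:ℕ) ≤ ⌊T⌋₊ := Nat.le_floor (by exact_mod_cast hT)
    have hflpos : (0:ℝ) < (⌊T⌋₊:ℝ) := by exact_mod_cast hfl1
    field_simp
  -- error part tends to 0
  have h2' : Tendsto (fun T : ℝ => (1 / T) * (u T - u (⌊T⌋₊ : ℝ))) atTop (nhds 0) := by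
    have hb : ∀ᶠ T : ℝ in atTop, |(1 / T) * (u T - u (⌊T⌋₊ : ℝ))| ≤ 1 / T := by
      filter_upwards [eventually_ge_atTop (1:ℝ)] with T hT
      have h0T : (0:ℝ) < T := lt_of_lt_of_le one_pos hT
      have hfle : (⌊T⌋₊ : ℝ) ≤ T := Nat.floor_le (le_of_lt h0T)
      have hdiff : u T - u (⌊T⌋₊ : ℝ) = ∫ t in (⌊T⌋₊:ℝ)..T, h t := by
        have key := intervalIntegral.integral_add_adjacent_intervals
          (ii hm h0 h1 0 (⌊T⌋₊:ℝ)) (ii hm h0 h1 (⌊T⌋₊:ℝ) T)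
        simp only [hu]
        linarith
      have hbnds := int_bounds hm h0 h1 hfle
      rw [abs_mul, hdiff]
      have : |∫ t in (⌊T⌋₊:ℝ)..T, h t| ≤ T - (⌊T⌋₊:ℝ) := by
        rw [abs_of_nonneg hbnds.1]; exact hbnds.2
      calc |1/T| * |∫ t in (⌊T⌋₊:ℝ)..T, h t| ≤ (1/T) * (T - (⌊T⌋₊:ℝ)) := by
            rw [abs_of_nonneg (by positivity : (0:ℝ) ≤ 1/T)]
            exact mul_le_mul_of_nonneg_left this (by positivity)
        _ ≤ 1/T := by
            have h1T : T - (⌊T⌋₊:ℝ) ≤ 1 := by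
              have := Nat.lt_floor_add_one T
              linarith
            calc (1/T) * (T - (⌊T⌋₊:ℝ)) ≤ (1/T) * 1 :=
                  mul_le_mul_of_nonneg_left h1T (by positivity)
              _ = 1/T := mul_one _
    have h0' : Tendsto (fun T : ℝ => 1 / T) atTop (nhds (0:ℝ)) := by
      simpa [one_div] using (tendsto_inv_atTop_zero : Tendsto (fun T:ℝ => T⁻¹) atTop (nhds 0))
    refine squeeze_zero_norm' ?_ h0'
    simpa [Real.norm_eq_abs, abs_mul, abs_inv] using hb
  have := h1'.add h2'
  rw [add_zero] at this
  refine this.congr fun T => by ring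

/-- shifting time by s ≥ 0 preserves the Cesàro limit -/
lemma shift_tendsto {h : ℝ → ℝ} (hm : Measurable h) (h0 : ∀ t, 0 ≤ h t) (h1 : ∀ t, h t ≤ 1)
    {s ℓ : ℝ} (hs : 0 ≤ s)
    (hl : Tendsto (fun T : ℝ => (1 / T) * ∫ t in (0:ℝ)..T, h t) atTop (nhds ℓ)) :
    Tendsto (fun T : ℝ => (1 / T) * ∫ t in (0:ℝ)..T, h (t + s)) atTop (nhds ℓ) := by
  have hident : ∀ T : ℝ, (∫ t in (0:ℝ)..T, h (t + s))
      = (∫ t in (0:ℝ)..(T+s), h t) - ∫ t in (0:ℝ)..s, h t := by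
    intro T
    have h1' : (∫ t in (0:ℝ)..T, h (t + s)) = ∫ t in s..(T+s), h t := by
      simpa using intervalIntegral.integral_comp_add_right (a := (0:ℝ)) (b := T) h s
    have key := intervalIntegral.integral_add_adjacent_intervals
      (ii hm h0 h1 0 s) (ii hm h0 h1 s (T+s))
    rw [h1']; linarith
  have t1 : Tendsto (fun T : ℝ => (1 / T) * ∫ t in (0:ℝ)..(T+s), h t) atTop (nhds ℓ) := by
    have hcomp : Tendsto (fun T : ℝ => (1 / (T+s)) * ∫ t in (0:ℝ)..(T+s), h t) atTop (nhds ℓ) :=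
      hl.comp (tendsto_atTop_add_const_right atTop s tendsto_id)
    have hrat : Tendsto (fun T : ℝ => (T+s)/T) atTop (nhds 1) := by
      have : Tendsto (fun T : ℝ => 1 + s * T⁻¹) atTop (nhds (1 + s * 0)) :=
        (tendsto_const_nhds.add (tendsto_const_nhds.mul tendsto_inv_atTop_zero))
      rw [mul_zero, add_zero] at this
      refine this.congr' ?_
      filter_upwards [eventually_gt_atTop (0:ℝ)] with T hT
      field_simp
    have := hcomp.mul hrat
    rw [mul_one] at this
    refine this.congr' ?_
    filter_upwards [eventually_gt_atTop (0:ℝ)] with T hT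
    have hTs : T + s ≠ 0 := by positivity
    field_simp
  have t2 : Tendsto (fun T : ℝ => (1 / T) * ∫ t in (0:ℝ)..s, h t) atTop (nhds 0) := by
    have h0' : Tendsto (fun T : ℝ => 1 / T) atTop (nhds (0:ℝ)) := by
      simpa [one_div] using (tendsto_inv_atTop_zero : Tendsto (fun T:ℝ => T⁻¹) atTop (nhds 0))
    simpa using h0'.mul (tendsto_const_nhds (x := ∫ t in (0:ℝ)..s, h t))
  have := t1.sub t2
  rw [sub_zero] at this
  refine this.congr fun T => ?_
  rw [hident T]; ring


section Discrete

variable {X : Type*} [MeasurableSpace X] (ρ : Measure X) [IsProbabilityMeasure ρ]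
  (T : X → X) (hT : MeasurePreserving T ρ ρ)

lemma integrable_of_bdd {u : X → ℝ} (hu : Measurable u) {c : ℝ} (hc : ∀ x, |u x| ≤ c) :
    Integrable u ρ :=
  (integrable_const c).mono' hu.aestronglyMeasurable
    (Eventually.of_forall fun x => by rw [Real.norm_eq_abs]; exact hc x)

include hT in
lemma integral_comp_mp {u : X → ℝ} (hu : Measurable u) :
    ∫ x, u (T x) ∂ρ = ∫ x, u x ∂ρ := by
  rw [← integral_map hT.measurable.aemeasurable hu.aestronglyMeasurable, hT.map_eq]

lemma birkhoffSum_measurable {g : X → ℝ} (hg : Measurable g) (hTm : Measurable T) (n : ℕ) :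
    Measurable fun x => birkhoffSum T g n x := by
  unfold birkhoffSum
  exact Finset.measurable_sum _ fun k _ => hg.comp (hTm.iterate k)

lemma birkhoffSum_abs_le {g : X → ℝ} {C : ℝ} (hC : ∀ x, |g x| ≤ C) (n : ℕ) (x : X) :
    |birkhoffSum T g n x| ≤ n * C := by
  calc |birkhoffSum T g n x| ≤ ∑ k ∈ Finset.range n, |g (T^[k] x)| :=
        Finset.abs_sum_le_sum_abs _ _
    _ ≤ ∑ k ∈ Finset.range n, C := Finset.sum_le_sum fun k _ => hC _
    _ = n * C := by simp [mul_comm]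

/-- the running maxima `P n x = max (0, S₁ x, ..., S n x)` -/
noncomputable def runMax (g : X → ℝ) : ℕ → X → ℝ
  | 0 => fun _ => 0
  | (n+1) => fun x => max (runMax g n x) (birkhoffSum T g (n+1) x)

lemma runMax_nonneg (g : X → ℝ) (n : ℕ) (x : X) : 0 ≤ runMax T g n x := by
  induction n with
  | zero => simp [runMax]
  | succ n ih => exact le_trans ih (le_max_left _ _)

lemma runMax_mono (g : X → ℝ) (n : ℕ) (x : X) : runMax T g n x ≤ runMax T g (n+1) x :=
  le_max_left _ _

lemma runMax_measurable {g : X → ℝ} (hg : Measurable g) (hTm : Measurable T) (n : ℕ) :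
    Measurable (runMax T g n) := by
  induction n with
  | zero => simpa [runMax] using measurable_const
  | succ n ih => exact ih.max (birkhoffSum_measurable T hg hTm (n+1))

lemma birkhoffSum_le_runMax (g : X → ℝ) (n : ℕ) (x : X) (hn : 1 ≤ n) :
    ∀ k, 1 ≤ k → k ≤ n → birkhoffSum T g k x ≤ runMax T g n x := by
  induction n with
  | zero => omega
  | succ n ih =>
    intro k hk1 hkn
    rcases Nat.lt_or_ge k (n+1) with h | h
    · rcases Nat.eq_zero_or_pos n with rfl | hn0
      · omega
      · exact le_trans (ih hn0 k hk1 (by omega)) (runMax_mono T g n x)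
    · have : k = n + 1 := by omega
      subst this
      exact le_max_right _ _

lemma runMax_abs_le {g : X → ℝ} {C : ℝ} (hC0 : 0 ≤ C) (hC : ∀ x, |g x| ≤ C) (n : ℕ) (x : X) :
    |runMax T g n x| ≤ (n+1) * C := by
  rw [abs_of_nonneg (runMax_nonneg T g n x)]
  induction n with
  | zero => simpa [runMax] using by positivity
  | succ n ih =>
    refine max_le (le_trans ih ?_) ?_
    · push_cast
      nlinarith
    · have := (abs_le.mp (birkhoffSum_abs_le T hC (n+1) x)).2
      refine le_trans this ?_
      push_cast
      nlinarith

lemma runMax_succ_le (g : X → ℝ) (n : ℕ) (x : X) :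
    runMax T g (n+1) x ≤ max 0 (g x + runMax T g n (T x)) := by
  induction n with
  | zero =>
    show max (runMax T g 0 x) (birkhoffSum T g 1 x) ≤ _
    simp [runMax, birkhoffSum_one]
  | succ n ih =>
    show max (runMax T g (n+1) x) (birkhoffSum T g (n+2) x) ≤ _
    refine max_le (le_trans ih ?_) ?_
    · exact max_le_max le_rfl (add_le_add le_rfl (runMax_mono T g n (T x)))
    · have h1 : birkhoffSum T g (n+2) x = g x + birkhoffSum T g (n+1) (T x) :=
        birkhoffSum_succ' T g (n+1) x
      have h2 : birkhoffSum T g (n+1) (T x) ≤ runMax T g (n+1) (T x) := le_max_right _ _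
      refine le_trans ?_ (le_max_right _ _)
      rw [h1]
      linarith

include hT in
/-- Garsia's maximal ergodic lemma -/
lemma maximal_ergodic {g : X → ℝ} (hg : Measurable g) {C : ℝ} (hC0 : 0 ≤ C)
    (hC : ∀ x, |g x| ≤ C) :
    0 ≤ ∫ x in {x | ∃ n : ℕ, 0 < birkhoffSum T g (n+1) x}, g x ∂ρ := by
  have hTm : Measurable T := hT.measurable
  set P := runMax T g with hP
  set A : ℕ → Set X := fun n => {x | 0 < P (n+1) x} with hA
  have hAm : ∀ n, MeasurableSet (A n) :=
    fun n => measurableSet_lt measurable_const (runMax_measurable T hg hTm (n+1))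
  have hintP : ∀ n, Integrable (P n) ρ :=
    fun n => integrable_of_bdd ρ (runMax_measurable T hg hTm n) (runMax_abs_le T hC0 hC n)
  have hintg : Integrable g ρ := integrable_of_bdd ρ hg hC
  -- step 1: ∫_{A n} g ≥ 0
  have step1 : ∀ n, 0 ≤ ∫ x in A n, g x ∂ρ := by
    intro n
    have key : ∀ x ∈ A n, P (n+1) x - P n (T x) ≤ g x := by
      intro x hx
      have h1 := runMax_succ_le T g n x
      have h2 : (0:ℝ) < P (n+1) x := hx
      rcases max_cases 0 (g x + runMax T g n (T x)) with ⟨he, _⟩ | ⟨he, _⟩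
      · rw [he] at h1; linarith
      · rw [he] at h1; linarith
    have hint1 : IntegrableOn (fun x => P (n+1) x - P n (T x)) (A n) ρ := by
      refine Integrable.integrableOn ?_
      exact (hintP (n+1)).sub ((integrable_map_measure ((runMax_measurable T hg hTm n)).aestronglyMeasurable hTm.aemeasurable).mp (by rw [hT.map_eq]; exact hintP n))
    have hmono := setIntegral_mono_on hint1 hintg.integrableOn (hAm n) key
    -- ∫_{A n} (P (n+1) - P n ∘ T) ≥ 0
    have e1 : ∫ x in A n, P (n+1) x ∂ρ = ∫ x, P (n+1) x ∂ρ := by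
      rw [← integral_indicator (hAm n)]
      refine integral_congr_ae (Eventually.of_forall fun x => ?_)
      by_cases hx : x ∈ A n
      · rw [Set.indicator_of_mem hx]
      · rw [Set.indicator_of_notMem hx]
        have h2 := runMax_nonneg T g (n+1) x
        have h3 : ¬ (0 < P (n+1) x) := hx
        linarith
    have e2 : ∫ x in A n, P n (T x) ∂ρ ≤ ∫ x, P n (T x) ∂ρ := by
      refine setIntegral_le_integral ?_ (Eventually.of_forall fun x => runMax_nonneg T g n (T x))
      exact (integrable_map_measure ((runMax_measurable T hg hTm n)).aestronglyMeasurable hTm.aemeasurable).mp (by rw [hT.map_eq]; exact hintP n)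
    have e3 : ∫ x, P n (T x) ∂ρ = ∫ x, P n x ∂ρ :=
      integral_comp_mp ρ T hT (runMax_measurable T hg hTm n)
    have e4 : ∫ x, P n x ∂ρ ≤ ∫ x, P (n+1) x ∂ρ :=
      integral_mono (hintP n) (hintP (n+1)) (runMax_mono T g n)
    have e5 : ∫ x in A n, (P (n+1) x - P n (T x)) ∂ρ
        = ∫ x in A n, P (n+1) x ∂ρ - ∫ x in A n, P n (T x) ∂ρ := by
      refine integral_sub ?_ ?_
      · exact (hintP (n+1)).integrableOn
      · exact Integrable.integrableOn ((integrable_map_measure ((runMax_measurable T hg hTm n)).aestronglyMeasurable hTm.aemeasurable).mp (by rw [hT.map_eq]; exact hintP n))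
    rw [e5] at hmono
    linarith
  -- step 2: A n increasing with union the maximal set
  have hmonoA : Monotone A := by
    intro m n hmn
    intro x hx
    have : P (m+1) x ≤ P (n+1) x := by
      clear hx
      induction hmn with
      | refl => exact le_refl _
      | step h ih => exact le_trans ih (runMax_mono T g _ x)
    exact lt_of_lt_of_le hx this
  have hunion : (⋃ n, A n) = {x | ∃ n : ℕ, 0 < birkhoffSum T g (n+1) x} := by
    ext x
    simp only [Set.mem_iUnion, Set.mem_setOf_eq, hA]
    constructor
    · rintro ⟨n, hn⟩
      -- P (n+1) x > 0 → some S (k+1) x > 0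
      induction n with
      | zero =>
        refine ⟨0, ?_⟩
        have h1 : P 1 x = max (0:ℝ) (birkhoffSum T g 1 x) := rfl
        rw [h1, lt_max_iff] at hn
        rcases hn with h | h
        · exact absurd h (lt_irrefl 0)
        · exact h
      | succ n ih =>
        have : P (n+2) x = max (P (n+1) x) (birkhoffSum T g (n+2) x) := rfl
        rw [this] at hn
        rcases lt_max_iff.mp hn with h | h
        · exact ih h
        · exact ⟨n+1, h⟩
    · rintro ⟨n, hn⟩
      exact ⟨n, lt_of_lt_of_le hn (birkhoffSum_le_runMax T g (n+1) x (by omega) (n+1) (by omega) le_rfl)⟩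
  have hUm : MeasurableSet (⋃ n, A n) := MeasurableSet.iUnion hAm
  have hlim : Tendsto (fun n => ∫ x in A n, g x ∂ρ) atTop
      (nhds (∫ x in ⋃ n, A n, g x ∂ρ)) :=
    tendsto_setIntegral_of_monotone hAm hmonoA hintg.integrableOn
  rw [← hunion]
  exact ge_of_tendsto' hlim step1

/-- frequent smallness is stable under perturbations tending to 0 -/
lemma freq_lt_perturb {u v : ℕ → ℝ} (hd : Tendsto (fun n => u n - v n) atTop (nhds 0))
    {c ε : ℝ} (hε : 0 < ε) (h : ∃ᶠ n in atTop, u n < c) :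
    ∃ᶠ n in atTop, v n < c + ε := by
  have habs : ∀ᶠ n in atTop, |u n - v n| < ε := by
    have := hd.abs
    rw [abs_zero] at this
    exact this.eventually (eventually_lt_nhds hε)
  refine (h.and_eventually habs).mono ?_
  rintro n ⟨h1, h2⟩
  have := abs_lt.mp h2
  linarith

lemma freq_gt_perturb {u v : ℕ → ℝ} (hd : Tendsto (fun n => u n - v n) atTop (nhds 0))
    {c ε : ℝ} (hε : 0 < ε) (h : ∃ᶠ n in atTop, c < u n) :
    ∃ᶠ n in atTop, c - ε < v n := by
  have habs : ∀ᶠ n in atTop, |u n - v n| < ε := by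
    have := hd.abs
    rw [abs_zero] at this
    exact this.eventually (eventually_lt_nhds hε)
  refine (h.and_eventually habs).mono ?_
  rintro n ⟨h1, h2⟩
  have := abs_lt.mp h2
  linarith

variable (f : X → ℝ)

/-- Birkhoff averages -/
noncomputable def Av (n : ℕ) (x : X) : ℝ := (n:ℝ)⁻¹ * birkhoffSum T f n x

lemma Av_nonneg (h0 : ∀ x, 0 ≤ f x) (n : ℕ) (x : X) : 0 ≤ Av T f n x :=
  mul_nonneg (by positivity) (Finset.sum_nonneg fun k _ => h0 _)

lemma Av_le_one (h1 : ∀ x, f x ≤ 1) (h0 : ∀ x, 0 ≤ f x) (n : ℕ) (x : X) : Av T f n x ≤ 1 := by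
  rcases Nat.eq_zero_or_pos n with rfl | hn
  · simp [Av, birkhoffSum_zero]
  · have hS : birkhoffSum T f n x ≤ n := by
      have := birkhoffSum_abs_le (C := 1) T (fun x => abs_le.mpr ⟨by linarith [h0 x], h1 x⟩) n x
      have := (abs_le.mp this).2
      linarith [this]
    have hn' : (0:ℝ) < n := by exact_mod_cast hn
    rw [Av]
    calc (n:ℝ)⁻¹ * birkhoffSum T f n x ≤ (n:ℝ)⁻¹ * n :=
      mul_le_mul_of_nonneg_left hS (by positivity)
    _ = 1 := by field_simp

/-- the difference of averages at x and T x tends to 0 -/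
lemma Av_diff_tendsto (h0 : ∀ x, 0 ≤ f x) (h1 : ∀ x, f x ≤ 1) (x : X) :
    Tendsto (fun n => Av T f n (T x) - Av T f n x) atTop (nhds 0) := by
  have hbound : ∀ n : ℕ, 1 ≤ n → |Av T f n (T x) - Av T f n x| ≤ 2 / n := by
    intro n hn
    have hdiff : birkhoffSum T f n (T x) - birkhoffSum T f n x = f (T^[n] x) - f x :=
      birkhoffSum_apply_sub_birkhoffSum T f n x
    have : Av T f n (T x) - Av T f n x = (n:ℝ)⁻¹ * (f (T^[n] x) - f x) := by
      rw [Av, Av, ← mul_sub, hdiff]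
    rw [this, abs_mul, abs_inv, Nat.abs_cast]
    have h2 : |f (T^[n] x) - f x| ≤ 2 := by
      have := h0 (T^[n] x); have := h1 (T^[n] x); have := h0 x; have := h1 x
      rw [abs_le]; constructor <;> linarith
    have hn' : (0:ℝ) < n := by exact_mod_cast hn
    rw [div_eq_inv_mul]
    exact mul_le_mul_of_nonneg_left h2 (by positivity)
  have h2n : Tendsto (fun n : ℕ => 2 / (n:ℝ)) atTop (nhds 0) :=
    tendsto_const_div_atTop_nhds_zero_nat 2
  refine squeeze_zero_norm' ?_ h2n
  filter_upwards [eventually_ge_atTop 1] with n hn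
  simpa [Real.norm_eq_abs] using hbound n hn

/-- crossing sets -/
def GSet (a b : ℝ) : Set X :=
  {x | ∀ k : ℕ, (∃ᶠ n in atTop, Av T f n x < a + 1/(k+1)) ∧
      (∃ᶠ n in atTop, b - 1/(k+1) < Av T f n x)}

lemma one_div_succ_pos (k : ℕ) : (0:ℝ) < 1/((k:ℝ)+1) := by positivity

lemma GSet_invariant (h0 : ∀ x, 0 ≤ f x) (h1 : ∀ x, f x ≤ 1) (a b : ℝ) (x : X) :
    x ∈ GSet T f a b ↔ T x ∈ GSet T f a b := by
  have hd := Av_diff_tendsto T f h0 h1 x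
  have hd' : Tendsto (fun n => Av T f n x - Av T f n (T x)) atTop (nhds 0) := by
    simpa using hd.neg
  constructor
  · intro hx k
    have hk := hx (2*k+1)
    have heq : (1:ℝ)/(((2*k+1:ℕ):ℝ)+1) + 1/(((2*k+1:ℕ):ℝ)+1) = 1/((k:ℝ)+1) := by
      push_cast
      field_simp
      ring
    constructor
    · have := freq_lt_perturb hd' (one_div_succ_pos (2*k+1)) hk.1
      rw [add_assoc, heq] at this
      exact this
    · have := freq_gt_perturb hd' (one_div_succ_pos (2*k+1)) hk.2
      rw [sub_sub, heq] at this
      exact this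
  · intro hx k
    have hk := hx (2*k+1)
    have heq : (1:ℝ)/(((2*k+1:ℕ):ℝ)+1) + 1/(((2*k+1:ℕ):ℝ)+1) = 1/((k:ℝ)+1) := by
      push_cast
      field_simp
      ring
    constructor
    · have := freq_lt_perturb hd (one_div_succ_pos (2*k+1)) hk.1
      rw [add_assoc, heq] at this
      exact this
    · have := freq_gt_perturb hd (one_div_succ_pos (2*k+1)) hk.2
      rw [sub_sub, heq] at this
      exact this

lemma GSet_measurable (hf : Measurable f) (hTm : Measurable T) (a b : ℝ) :
    MeasurableSet (GSet T f a b) := by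
  have hAv : ∀ n, Measurable (Av T f n) := fun n =>
    (measurable_const.mul (birkhoffSum_measurable T hf hTm n))
  have : GSet T f a b = ⋂ k : ℕ,
      ((⋂ N : ℕ, ⋃ n : ℕ, ⋃ _ : N ≤ n, {x | Av T f n x < a + 1/(k+1)}) ∩
       (⋂ N : ℕ, ⋃ n : ℕ, ⋃ _ : N ≤ n, {x | b - 1/(k+1) < Av T f n x})) := by
    ext x
    simp [GSet, frequently_atTop, Set.mem_iInter, Set.mem_iUnion]
  rw [this]
  refine MeasurableSet.iInter fun k => MeasurableSet.inter ?_ ?_ <;>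
  · refine MeasurableSet.iInter fun N => MeasurableSet.iUnion fun n =>
      MeasurableSet.iUnion fun _ => ?_
    first
    | exact measurableSet_lt (hAv n) measurable_const
    | exact measurableSet_lt measurable_const (hAv n)


lemma orbit_mem_GSet (h0 : ∀ x, 0 ≤ f x) (h1 : ∀ x, f x ≤ 1) (a b : ℝ) (x : X) (k : ℕ) :
    (x ∈ GSet T f a b ↔ T^[k] x ∈ GSet T f a b) := by
  induction k with
  | zero => rfl
  | succ k ih =>
    rw [Function.iterate_succ_apply', ← GSet_invariant T f h0 h1 a b (T^[k] x)]
    exact ih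

include hT in
lemma GSet_null (hf : Measurable f) (h0 : ∀ x, 0 ≤ f x) (h1 : ∀ x, f x ≤ 1)
    {a b : ℝ} (hab : a < b) : ρ (GSet T f a b) = 0 := by
  have hTm : Measurable T := hT.measurable
  set ε := (b - a)/3 with hε
  have hεpos : 0 < ε := by rw [hε]; linarith
  set a' := a + ε with ha'
  set b' := b - ε with hb'
  have ha'b' : a' < b' := by rw [ha', hb', hε]; linarith
  set G := GSet T f a b with hG
  have hGm : MeasurableSet G := GSet_measurable T f hf hTm a b
  have horb : ∀ x k, (x ∈ G ↔ T^[k] x ∈ G) := fun x k => orbit_mem_GSet T f h0 h1 a b x k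
  obtain ⟨k₀, hk₀⟩ := exists_nat_one_div_lt hεpos
  -- first application: g₁ = χ_G (f - b')
  have key : ∀ (c : ℝ), (∀ x ∈ G, ∃ n : ℕ, 1 ≤ n ∧ c * n < birkhoffSum T (fun y => c - (c - f y)) n x) →
      True := fun _ _ => trivial
  have sum_eq : ∀ (u : X → ℝ) (x : X), x ∈ G → ∀ n : ℕ,
      birkhoffSum T (G.indicator u) n x = birkhoffSum T u n x := by
    intro u x hx n
    unfold birkhoffSum
    refine Finset.sum_congr rfl fun k _ => ?_
    have : T^[k] x ∈ G := (horb x k).mp hx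
    rw [Set.indicator_of_mem this]
  have sum_zero : ∀ (u : X → ℝ) (x : X), x ∉ G → ∀ n : ℕ,
      birkhoffSum T (G.indicator u) n x = 0 := by
    intro u x hx n
    unfold birkhoffSum
    refine Finset.sum_eq_zero fun k _ => ?_
    have : T^[k] x ∉ G := fun h => hx ((horb x k).mpr h)
    rw [Set.indicator_of_notMem this]
  have hsub : ∀ (c : ℝ) (n : ℕ) (x : X), birkhoffSum T (fun y => f y - c) n x
      = birkhoffSum T f n x - n * c := by
    intro c n x
    unfold birkhoffSum
    rw [Finset.sum_sub_distrib, Finset.sum_const, Finset.card_range]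
    simp [nsmul_eq_mul]
  have hsub' : ∀ (c : ℝ) (n : ℕ) (x : X), birkhoffSum T (fun y => c - f y) n x
      = n * c - birkhoffSum T f n x := by
    intro c n x
    unfold birkhoffSum
    rw [Finset.sum_sub_distrib, Finset.sum_const, Finset.card_range]
    simp [nsmul_eq_mul]
  have hSAv : ∀ (n : ℕ) (x : X), birkhoffSum T f n x = n * Av T f n x := by
    intro n x
    rcases Nat.eq_zero_or_pos n with rfl | hn
    · simp [birkhoffSum_zero]
    · have hn' : ((n:ℝ)) ≠ 0 := by positivity
      rw [Av]
      field_simp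
  -- integral inequality 1 : b' * ρ(G) ≤ ∫_G f
  have int1 : b' * (ρ G).toReal ≤ ∫ x in G, f x ∂ρ := by
    set g₁ : X → ℝ := G.indicator (fun y => f y - b') with hg₁
    have hg₁m : Measurable g₁ := (hf.sub measurable_const).indicator hGm
    have hg₁b : ∀ x, |g₁ x| ≤ 1 + |b'| := by
      intro x
      rw [hg₁]
      by_cases hx : x ∈ G
      · rw [Set.indicator_of_mem hx]
        have := h0 x; have := h1 x
        rw [abs_sub_comm]
        calc |b' - f x| ≤ |b'| + |f x| := abs_sub _ _
          _ ≤ |b'| + 1 := by rw [abs_of_nonneg (h0 x)]; linarith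
          _ = 1 + |b'| := by ring
      · rw [Set.indicator_of_notMem hx]; simp; positivity
    have hset : {x | ∃ n : ℕ, 0 < birkhoffSum T g₁ (n+1) x} = G := by
      ext x
      simp only [Set.mem_setOf_eq]
      constructor
      · rintro ⟨n, hn⟩
        by_contra hx
        rw [hg₁, sum_zero _ x hx (n+1)] at hn
        exact lt_irrefl 0 hn
      · intro hx
        obtain ⟨n, hn1, hn2⟩ := frequently_atTop.mp ((hx k₀).2) 1
        refine ⟨n - 1, ?_⟩
        have hneq : n - 1 + 1 = n := by omega
        rw [hneq, hg₁, sum_eq _ x hx n, hsub]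
        have hnpos : (0:ℝ) < n := by exact_mod_cast hn1
        have hb'lt : b' < Av T f n x := by
          have : b - 1/(k₀+1) > b - ε := by linarith [hk₀]
          linarith [hn2]
        have := hSAv n x
        nlinarith
    have hmax := maximal_ergodic ρ T hT hg₁m (by positivity : (0:ℝ) ≤ 1 + |b'|) hg₁b
    rw [hset] at hmax
    have heq : ∫ x in G, g₁ x ∂ρ = ∫ x in G, f x ∂ρ - b' * (ρ G).toReal := by
      have e1 : ∫ x in G, g₁ x ∂ρ = ∫ x in G, (f x - b') ∂ρ := by
        refine setIntegral_congr_fun hGm fun x hx => ?_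
        rw [hg₁, Set.indicator_of_mem hx]
      rw [e1, integral_sub (integrable_of_bdd ρ hf (fun x => abs_le.mpr ⟨by linarith [h0 x], h1 x⟩)).integrableOn (integrableOn_const (measure_ne_top ρ G))]
      rw [setIntegral_const]
      simp [smul_eq_mul, mul_comm, Measure.real]
    rw [heq] at hmax
    linarith
  -- integral inequality 2 : ∫_G f ≤ a' * ρ(G)
  have int2 : ∫ x in G, f x ∂ρ ≤ a' * (ρ G).toReal := by
    set g₂ : X → ℝ := G.indicator (fun y => a' - f y) with hg₂
    have hg₂m : Measurable g₂ := (measurable_const.sub hf).indicator hGm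
    have hg₂b : ∀ x, |g₂ x| ≤ |a'| + 1 := by
      intro x
      rw [hg₂]
      by_cases hx : x ∈ G
      · rw [Set.indicator_of_mem hx]
        calc |a' - f x| ≤ |a'| + |f x| := abs_sub _ _
          _ ≤ |a'| + 1 := by rw [abs_of_nonneg (h0 x)]; linarith [h1 x]
      · rw [Set.indicator_of_notMem hx]; simp; positivity
    have hset : {x | ∃ n : ℕ, 0 < birkhoffSum T g₂ (n+1) x} = G := by
      ext x
      simp only [Set.mem_setOf_eq]
      constructor
      · rintro ⟨n, hn⟩
        by_contra hx
        rw [hg₂, sum_zero _ x hx (n+1)] at hn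
        exact lt_irrefl 0 hn
      · intro hx
        obtain ⟨n, hn1, hn2⟩ := frequently_atTop.mp ((hx k₀).1) 1
        refine ⟨n - 1, ?_⟩
        have hneq : n - 1 + 1 = n := by omega
        rw [hneq, hg₂, sum_eq _ x hx n, hsub']
        have hnpos : (0:ℝ) < n := by exact_mod_cast hn1
        have ha'gt : Av T f n x < a' := by
          have : a + 1/(k₀+1) < a + ε := by linarith [hk₀]
          linarith [hn2]
        have := hSAv n x
        nlinarith
    have hmax := maximal_ergodic ρ T hT hg₂m (by positivity : (0:ℝ) ≤ |a'| + 1) hg₂b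
    rw [hset] at hmax
    have heq : ∫ x in G, g₂ x ∂ρ = a' * (ρ G).toReal - ∫ x in G, f x ∂ρ := by
      have e1 : ∫ x in G, g₂ x ∂ρ = ∫ x in G, (a' - f x) ∂ρ := by
        refine setIntegral_congr_fun hGm fun x hx => ?_
        rw [hg₂, Set.indicator_of_mem hx]
      rw [e1, integral_sub (integrableOn_const (C := a') (measure_ne_top ρ G)) (integrable_of_bdd ρ hf (fun x => abs_le.mpr ⟨by linarith [h0 x], h1 x⟩)).integrableOn]
      rw [setIntegral_const]
      simp [smul_eq_mul, mul_comm, Measure.real]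
    rw [heq] at hmax
    linarith
  -- combine
  have hr : (0:ℝ) ≤ (ρ G).toReal := ENNReal.toReal_nonneg
  have : (ρ G).toReal = 0 := by nlinarith
  have := (ENNReal.toReal_eq_zero_iff _).mp this
  rcases this with h | h
  · exact h
  · exact absurd h (measure_ne_top ρ G)


include hT in
/-- pointwise ergodic theorem for bounded nonnegative measurable functions -/
lemma birkhoff_bdd (hf : Measurable f) (h0 : ∀ x, 0 ≤ f x) (h1 : ∀ x, f x ≤ 1) :
    ∃ g : X → ℝ,
      (∀ᵐ x ∂ρ, Tendsto (fun n : ℕ => Av T f n x) atTop (nhds (g x))) ∧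
      ∫ x, g x ∂ρ = ∫ x, f x ∂ρ := by
  have hTm : Measurable T := hT.measurable
  -- the null set of non-convergence
  set N : Set X := ⋃ p : {q : ℚ × ℚ // q.1 < q.2}, GSet T f p.1.1 p.1.2 with hN
  have hNnull : ρ N = 0 := by
    refine measure_iUnion_null fun p => ?_
    exact GSet_null ρ T hT f hf h0 h1 (by exact_mod_cast p.2)
  have hconv : ∀ x ∉ N, ∃ c : ℝ, Tendsto (fun n => Av T f n x) atTop (nhds c) := by
    intro x hx
    set u : ℕ → ℝ := fun n => Av T f n x with hu
    have hb1 : IsBoundedUnder (· ≤ ·) atTop u :=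
      isBoundedUnder_of ⟨1, fun n => Av_le_one T f h1 h0 n x⟩
    have hb2 : IsBoundedUnder (· ≥ ·) atTop u :=
      isBoundedUnder_of ⟨0, fun n => Av_nonneg T f h0 n x⟩
    have hle : liminf u atTop ≤ limsup u atTop := liminf_le_limsup hb1 hb2
    rcases eq_or_lt_of_le hle with heq | hlt
    · exact ⟨limsup u atTop, tendsto_of_liminf_eq_limsup heq rfl hb1 hb2⟩
    · exfalso
      obtain ⟨q, hq1, hq2⟩ := exists_rat_btwn hlt
      obtain ⟨r, hr1, hr2⟩ := exists_rat_btwn hq2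
      have hfr1 : ∃ᶠ n in atTop, u n < q :=
        frequently_lt_of_liminf_lt hb1.isCoboundedUnder_ge hq1
      have hfr2 : ∃ᶠ n in atTop, (r:ℝ) < u n :=
        frequently_lt_of_lt_limsup hb2.isCoboundedUnder_le hr2
      have hmem : x ∈ GSet T f q r := by
        intro k
        constructor
        · exact hfr1.mono fun n hn => lt_of_lt_of_le hn
            (by linarith [one_div_succ_pos k])
        · exact hfr2.mono fun n hn => by linarith [one_div_succ_pos k]
      exact hx (Set.mem_iUnion.mpr ⟨⟨(q, r), by exact_mod_cast hr1⟩, hmem⟩)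
  classical
  set g : X → ℝ := fun x =>
    if h : ∃ c : ℝ, Tendsto (fun n => Av T f n x) atTop (nhds c) then h.choose else 0 with hg
  have hae : ∀ᵐ x ∂ρ, Tendsto (fun n => Av T f n x) atTop (nhds (g x)) := by
    have : ∀ x ∉ N, Tendsto (fun n => Av T f n x) atTop (nhds (g x)) := by
      intro x hx
      have h := hconv x hx
      rw [hg]
      simp only [dif_pos h]
      exact h.choose_spec
    refine Eventually.mono (measure_eq_zero_iff_ae_notMem.mp hNnull) this
  refine ⟨g, hae, ?_⟩
  -- integral identity
  have hAvm : ∀ n, Measurable (fun x => Av T f n x) := fun n =>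
    measurable_const.mul (birkhoffSum_measurable T hf hTm n)
  have hgm : AEStronglyMeasurable g ρ := by
    refine (aemeasurable_of_tendsto_metrizable_ae atTop (fun n => (hAvm n).aemeasurable) hae).aestronglyMeasurable
  have hdom : Tendsto (fun n => ∫ x, Av T f n x ∂ρ) atTop (nhds (∫ x, g x ∂ρ)) := by
    refine tendsto_integral_of_dominated_convergence (fun _ => (1:ℝ)) 
      (fun n => (hAvm n).aestronglyMeasurable) (integrable_const 1) ?_ hae
    intro n
    refine Eventually.of_forall fun x => ?_
    rw [Real.norm_eq_abs, abs_of_nonneg (Av_nonneg T f h0 n x)]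
    exact Av_le_one T f h1 h0 n x
  have hint : ∀ n : ℕ, 1 ≤ n → ∫ x, Av T f n x ∂ρ = ∫ x, f x ∂ρ := by
    intro n hn
    have hSint : ∫ x, birkhoffSum T f n x ∂ρ = n * ∫ x, f x ∂ρ := by
      unfold birkhoffSum
      rw [integral_finset_sum]
      · have : ∀ k ∈ Finset.range n, ∫ x, f (T^[k] x) ∂ρ = ∫ x, f x ∂ρ := by
          intro k _
          exact integral_comp_mp ρ (T^[k]) (hT.iterate k) hf
        rw [Finset.sum_congr rfl this]
        simp [mul_comm]
      · intro k _
        exact integrable_of_bdd ρ (hf.comp (hTm.iterate k))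
          (fun x => abs_le.mpr ⟨by have := h0 (T^[k] x); exact by linarith, h1 (T^[k] x)⟩)
    unfold Av
    rw [integral_const_mul, hSint]
    have hn' : ((n:ℝ)) ≠ 0 := by positivity
    field_simp
  have hev : ∀ᶠ n in atTop, ∫ x, Av T f n x ∂ρ = ∫ x, f x ∂ρ :=
    eventually_atTop.mpr ⟨1, hint⟩
  have : Tendsto (fun n => ∫ x, Av T f n x ∂ρ) atTop (nhds (∫ x, f x ∂ρ)) :=
    Tendsto.congr' (hev.mono fun n hn => hn.symm) tendsto_const_nhds
  exact tendsto_nhds_unique hdom this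

end Discrete

section Flow

variable {X : Type*} [MeasurableSpace X] (ρ : Measure X) [IsProbabilityMeasure ρ]
  (σ : ℝ → X → X)

/-- time-indicator function along an orbit -/
lemma orbit_meas (hjm : Measurable fun p : ℝ × X => σ p.1 p.2) {B : Set X}
    (hB : MeasurableSet B) (x : X) :
    Measurable fun t : ℝ => B.indicator (fun _ => (1:ℝ)) (σ t x) := by
  have h1 : Measurable (B.indicator (fun _ => (1:ℝ))) := measurable_const.indicator hB
  exact h1.comp (hjm.comp (measurable_id.prodMk measurable_const))

lemma ind_nonneg (B : Set X) (y : X) : 0 ≤ B.indicator (fun _ => (1:ℝ)) y :=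
  Set.indicator_nonneg (fun _ _ => zero_le_one) y

lemma ind_le_one (B : Set X) (y : X) : B.indicator (fun _ => (1:ℝ)) y ≤ 1 := by
  by_cases h : y ∈ B
  · rw [Set.indicator_of_mem h]
  · rw [Set.indicator_of_notMem h]; exact zero_le_one

lemma sigma_iterate (hσ0 : σ 0 = id)
    (hσadd : ∀ s t : ℝ, 0 ≤ s → 0 ≤ t → σ (s + t) = σ s ∘ σ t) (x : X) (k : ℕ) :
    (σ 1)^[k] x = σ (k:ℝ) x := by
  induction k with
  | zero => simp [hσ0]
  | succ k ih =>
    rw [Function.iterate_succ_apply', ih]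
    have := hσadd 1 (k:ℝ) zero_le_one (by positivity)
    have h2 : ((k:ℝ) + 1) = 1 + (k:ℝ) := by ring
    push_cast
    rw [h2, this]
    rfl

/-- the unit-time sojourn function -/
noncomputable def Fb (B : Set X) (x : X) : ℝ :=
  ∫ t in (0:ℝ)..1, B.indicator (fun _ => (1:ℝ)) (σ t x)

lemma Fb_nonneg (hjm : Measurable fun p : ℝ × X => σ p.1 p.2) {B : Set X}
    (hB : MeasurableSet B) (x : X) : 0 ≤ Fb σ B x :=
  (int_bounds (orbit_meas σ hjm hB x) (fun t => ind_nonneg B _) (fun t => ind_le_one B _)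
    zero_le_one).1

lemma Fb_le_one (hjm : Measurable fun p : ℝ × X => σ p.1 p.2) {B : Set X}
    (hB : MeasurableSet B) (x : X) : Fb σ B x ≤ 1 := by
  have := (int_bounds (orbit_meas σ hjm hB x) (fun t => ind_nonneg B _)
    (fun t => ind_le_one B _) zero_le_one).2
  simpa [Fb] using this

lemma Fb_measurable (hjm : Measurable fun p : ℝ × X => σ p.1 p.2) {B : Set X}
    (hB : MeasurableSet B) : Measurable (Fb σ B) := by
  have h1 : Measurable (B.indicator (fun _ => (1:ℝ))) := measurable_const.indicator hB
  have hker : Measurable fun p : X × ℝ => B.indicator (fun _ => (1:ℝ)) (σ p.2 p.1) :=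
    h1.comp (hjm.comp (measurable_snd.prodMk measurable_fst))
  have := (hker.stronglyMeasurable).integral_prod_right'
    (ν := volume.restrict (Set.Ioc (0:ℝ) 1))
  have heq : ∀ x : X, Fb σ B x
      = ∫ t in Set.Ioc (0:ℝ) 1, B.indicator (fun _ => (1:ℝ)) (σ t x) ∂volume := by
    intro x
    rw [Fb, intervalIntegral.integral_of_le zero_le_one]
  have hfun : Fb σ B = fun x => ∫ t in Set.Ioc (0:ℝ) 1, B.indicator (fun _ => (1:ℝ)) (σ t x) ∂volume :=
    funext heq
  rw [hfun]
  exact this.measurable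

lemma Fb_sum (hσ0 : σ 0 = id)
    (hσadd : ∀ s t : ℝ, 0 ≤ s → 0 ≤ t → σ (s + t) = σ s ∘ σ t)
    (hjm : Measurable fun p : ℝ × X => σ p.1 p.2) {B : Set X}
    (hB : MeasurableSet B) (x : X) (n : ℕ) :
    birkhoffSum (σ 1) (Fb σ B) n x = ∫ t in (0:ℝ)..(n:ℝ), B.indicator (fun _ => (1:ℝ)) (σ t x) := by
  induction n with
  | zero => simp [birkhoffSum_zero]
  | succ n ih =>
    rw [birkhoffSum_succ, ih, sigma_iterate σ hσ0 hσadd x n]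
    have hF : Fb σ B (σ (n:ℝ) x) = ∫ t in (n:ℝ)..((n:ℝ)+1), B.indicator (fun _ => (1:ℝ)) (σ t x) := by
      have e1 : Fb σ B (σ (n:ℝ) x)
          = ∫ t in (0:ℝ)..1, B.indicator (fun _ => (1:ℝ)) (σ (t + (n:ℝ)) x) := by
        rw [Fb]
        refine intervalIntegral.integral_congr fun t ht => ?_
        rw [Set.uIcc_of_le zero_le_one] at ht
        rw [hσadd t (n:ℝ) ht.1 (by positivity)]
        rfl
      have e2 : (∫ t in (0:ℝ)..1, B.indicator (fun _ => (1:ℝ)) (σ (t + (n:ℝ)) x))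
          = ∫ t in (n:ℝ)..((n:ℝ)+1), B.indicator (fun _ => (1:ℝ)) (σ t x) := by
        have := intervalIntegral.integral_comp_add_right (a := (0:ℝ)) (b := 1)
          (fun t => B.indicator (fun _ => (1:ℝ)) (σ t x)) (n:ℝ)
        simpa [zero_add, add_comm] using this
      rw [e1, e2]
    rw [hF]
    have hadj := intervalIntegral.integral_add_adjacent_intervals
      (ii (orbit_meas σ hjm hB x) (fun t => ind_nonneg B _) (fun t => ind_le_one B _) 0 (n:ℝ))
      (ii (orbit_meas σ hjm hB x) (fun t => ind_nonneg B _) (fun t => ind_le_one B _) (n:ℝ) ((n:ℝ)+1))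
    push_cast
    linarith


lemma Fb_integral (hjm : Measurable fun p : ℝ × X => σ p.1 p.2)
    (hmp : ∀ τ : ℝ, 0 ≤ τ → MeasurePreserving (σ τ) ρ ρ)
    {B : Set X} (hB : MeasurableSet B) :
    ∫ x, Fb σ B x ∂ρ = (ρ B).toReal := by
  have h1 : Measurable (B.indicator (fun _ => (1:ℝ))) := measurable_const.indicator hB
  set ν : Measure ℝ := volume.restrict (Set.Ioc (0:ℝ) 1) with hν
  have heq : ∀ x : X, Fb σ B x = ∫ t, B.indicator (fun _ => (1:ℝ)) (σ t x) ∂ν := by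
    intro x
    rw [Fb, intervalIntegral.integral_of_le zero_le_one]
  have hswap : ∫ x, (∫ t, B.indicator (fun _ => (1:ℝ)) (σ t x) ∂ν) ∂ρ
      = ∫ t, (∫ x, B.indicator (fun _ => (1:ℝ)) (σ t x) ∂ρ) ∂ν := by
    refine integral_integral_swap ?_
    have hm : Measurable (Function.uncurry fun (x : X) (t : ℝ) =>
        B.indicator (fun _ => (1:ℝ)) (σ t x)) := by
      exact h1.comp (hjm.comp (measurable_snd.prodMk measurable_fst))
    refine (integrable_const (1:ℝ)).mono' hm.aestronglyMeasurable ?_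
    refine Eventually.of_forall fun p => ?_
    show ‖B.indicator (fun _ => (1:ℝ)) (σ p.2 p.1)‖ ≤ 1
    rw [Real.norm_eq_abs, abs_of_nonneg (ind_nonneg B _)]
    exact ind_le_one B _
  have hinner : ∀ t ∈ Set.Ioc (0:ℝ) 1, (∫ x, B.indicator (fun _ => (1:ℝ)) (σ t x) ∂ρ)
      = (ρ B).toReal := by
    intro t ht
    rw [integral_comp_mp ρ (σ t) (hmp t ht.1.le) h1]
    rw [integral_indicator_const _ hB]
    simp
    rfl
  calc ∫ x, Fb σ B x ∂ρ = ∫ x, (∫ t, B.indicator (fun _ => (1:ℝ)) (σ t x) ∂ν) ∂ρ := by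
        exact integral_congr_ae (Eventually.of_forall heq)
    _ = ∫ t, (∫ x, B.indicator (fun _ => (1:ℝ)) (σ t x) ∂ρ) ∂ν := hswap
    _ = ∫ t in Set.Ioc (0:ℝ) 1, (ρ B).toReal ∂volume := by
        rw [hν]
        exact setIntegral_congr_fun measurableSet_Ioc hinner
    _ = (ρ B).toReal := by
        rw [setIntegral_const]
        simp

/-- continuous-time Birkhoff for indicators -/
lemma flow_birkhoff (hσ0 : σ 0 = id)
    (hσadd : ∀ s t : ℝ, 0 ≤ s → 0 ≤ t → σ (s + t) = σ s ∘ σ t)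
    (hjm : Measurable fun p : ℝ × X => σ p.1 p.2)
    (hmp : ∀ τ : ℝ, 0 ≤ τ → MeasurePreserving (σ τ) ρ ρ)
    {B : Set X} (hB : MeasurableSet B) :
    ∃ g : X → ℝ,
      (∀ᵐ x ∂ρ, Tendsto (fun T : ℝ =>
        (1 / T) * ∫ t in (0:ℝ)..T, B.indicator (fun _ => (1:ℝ)) (σ t x)) atTop (nhds (g x))) ∧
      ∫ x, g x ∂ρ = (ρ B).toReal := by
  obtain ⟨g, hg1, hg2⟩ := birkhoff_bdd ρ (σ 1) (hmp 1 zero_le_one) (Fb σ B)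
    (Fb_measurable σ hjm hB) (Fb_nonneg σ hjm hB) (Fb_le_one σ hjm hB)
  refine ⟨g, ?_, by rw [hg2]; exact Fb_integral ρ σ hjm hmp hB⟩
  refine hg1.mono fun x hx => ?_
  have hnat : Tendsto (fun n : ℕ =>
      (1 / (n:ℝ)) * ∫ t in (0:ℝ)..(n:ℝ), B.indicator (fun _ => (1:ℝ)) (σ t x)) atTop
      (nhds (g x)) := by
    refine hx.congr fun n => ?_
    rw [Av, Fb_sum σ hσ0 hσadd hjm hB x n, one_div]
  exact nat_to_real (orbit_meas σ hjm hB x) (fun t => ind_nonneg B _)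
    (fun t => ind_le_one B _) hnat

end Flow

end Stmt18Aux

open Stmt18Aux in
/-- Let `S_E⁺` (resp. `S_E⁰`) be the set of points whose mean sojourn time in `E` exists
and is positive (resp. exists and equals zero). Then the limit of the time averages of
the indicator of `E \ S_E⁺` vanishes `ρ`-a.e. on `S_E⁰ ∪ S_E⁺`, and consequently
`ρ(E \ S_E⁺) = 0`. -/
theorem stmt18 {X : Type*} [MeasurableSpace X]
    (ρ : Measure X) [IsProbabilityMeasure ρ]
    (σ : ℝ → X → X)
    (hσ0 : σ 0 = id)
    (hσadd : ∀ s t : ℝ, 0 ≤ s → 0 ≤ t → σ (s + t) = σ s ∘ σ t)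
    (hjm : Measurable fun p : ℝ × X => σ p.1 p.2)
    (hmp : ∀ τ : ℝ, 0 ≤ τ → MeasurePreserving (σ τ) ρ ρ)
    (E : Set X) (hE : MeasurableSet E)
    (SEp SE0 : Set X)
    (hSEp : SEp = {x : X | ∃ ℓ : ℝ, 0 < ℓ ∧
      Tendsto (fun T : ℝ =>
        (1 / T) * ∫ t in (0:ℝ)..T, E.indicator (fun _ => (1:ℝ)) (σ t x)) atTop (nhds ℓ)})
    (hSE0 : SE0 = {x : X |
      Tendsto (fun T : ℝ =>
        (1 / T) * ∫ t in (0:ℝ)..T, E.indicator (fun _ => (1:ℝ)) (σ t x)) atTop (nhds 0)}) :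
    (∀ᵐ x ∂ρ, x ∈ SE0 ∪ SEp →
      Tendsto (fun T : ℝ =>
        (1 / T) * ∫ t in (0:ℝ)..T, (E \ SEp).indicator (fun _ => (1:ℝ)) (σ t x))
        atTop (nhds 0)) ∧
    ρ (E \ SEp) = 0 := by
  classical
  have hT1 : MeasurePreserving (σ 1) ρ ρ := hmp 1 zero_le_one
  have hT1m : Measurable (σ 1) := hT1.measurable
  set F : X → ℝ := Fb σ E with hF
  -- Step 1 : SEp is measurable
  have hAvmeas : ∀ n : ℕ, Measurable fun x => Av (σ 1) F n x := fun n =>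
    measurable_const.mul (birkhoffSum_measurable (σ 1) (Fb_measurable σ hjm hE) hT1m n)
  have hAvint : ∀ (x : X) (n : ℕ), Av (σ 1) F n x
      = (1 / (n:ℝ)) * ∫ t in (0:ℝ)..(n:ℝ), E.indicator (fun _ => (1:ℝ)) (σ t x) := by
    intro x n
    rw [Av, Fb_sum σ hσ0 hσadd hjm hE x n, one_div]
  have hchar : SEp = {x | ∃ c : ℝ, Tendsto (fun n : ℕ => Av (σ 1) F n x) atTop (nhds c)} ∩
      ⋃ q : {q : ℚ // 0 < q}, {x | ∀ᶠ n : ℕ in atTop, ((q:ℚ):ℝ) ≤ Av (σ 1) F n x} := by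
    rw [hSEp]
    ext x
    simp only [Set.mem_setOf_eq, Set.mem_inter_iff, Set.mem_iUnion]
    constructor
    · rintro ⟨ℓ, hℓ, htd⟩
      have hnat : Tendsto (fun n : ℕ => Av (σ 1) F n x) atTop (nhds ℓ) := by
        have := htd.comp tendsto_natCast_atTop_atTop (α := ℕ)
        refine this.congr fun n => ?_
        rw [hAvint x n]
        rfl
      refine ⟨⟨ℓ, hnat⟩, ?_⟩
      obtain ⟨q, hq1, hq2⟩ := exists_rat_btwn hℓ
      have hq1' : 0 < q := by exact_mod_cast hq1
      exact ⟨⟨q, hq1'⟩, hnat.eventually (eventually_ge_nhds hq2)⟩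
    · rintro ⟨⟨c, hc⟩, ⟨⟨q, hq⟩, hev⟩⟩
      have hcq : ((q:ℚ):ℝ) ≤ c := ge_of_tendsto hc hev
      have hcpos : 0 < c := lt_of_lt_of_le (by exact_mod_cast hq) hcq
      refine ⟨c, hcpos, ?_⟩
      have hnat' : Tendsto (fun n : ℕ =>
          (1 / (n:ℝ)) * ∫ t in (0:ℝ)..(n:ℝ), E.indicator (fun _ => (1:ℝ)) (σ t x)) atTop
          (nhds c) := by
        refine hc.congr fun n => ?_
        rw [hAvint x n]
      exact nat_to_real (orbit_meas σ hjm hE x) (fun t => ind_nonneg E _)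
        (fun t => ind_le_one E _) hnat'
  have hSEpm : MeasurableSet SEp := by
    rw [hchar]
    refine MeasurableSet.inter (measurableSet_exists_tendsto hAvmeas) ?_
    refine MeasurableSet.iUnion fun q => ?_
    have : {x | ∀ᶠ n : ℕ in atTop, ((q:ℚ):ℝ) ≤ Av (σ 1) F n x}
        = ⋃ N : ℕ, ⋂ n : ℕ, ⋂ _ : N ≤ n, {x | ((q:ℚ):ℝ) ≤ Av (σ 1) F n x} := by
      ext x
      simp [eventually_atTop, Set.mem_iUnion, Set.mem_iInter]
    rw [this]
    exact MeasurableSet.iUnion fun N => MeasurableSet.iInter fun n => MeasurableSet.iInter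
      fun _ => measurableSet_le measurable_const (hAvmeas n)
  have hBm : MeasurableSet (E \ SEp) := hE.diff hSEpm
  -- Step 2 : forward invariance of SEp
  have hinv : ∀ x ∈ SEp, ∀ s : ℝ, 0 ≤ s → σ s x ∈ SEp := by
    intro x hx s hs
    rw [hSEp] at hx ⊢
    obtain ⟨ℓ, hℓ, htd⟩ := hx
    refine ⟨ℓ, hℓ, ?_⟩
    have hshift := shift_tendsto (orbit_meas σ hjm hE x) (fun t => ind_nonneg E _)
      (fun t => ind_le_one E _) hs htd
    refine hshift.congr' ?_
    filter_upwards [eventually_ge_atTop (0:ℝ)] with T hT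
    congr 1
    refine intervalIntegral.integral_congr fun t ht => ?_
    rw [Set.uIcc_of_le hT] at ht
    rw [hσadd t s ht.1 hs]
    rfl
  -- Step 3 : part 1 holds for every point of SE0 ∪ SEp
  have part1 : ∀ x ∈ SE0 ∪ SEp,
      Tendsto (fun T : ℝ =>
        (1 / T) * ∫ t in (0:ℝ)..T, (E \ SEp).indicator (fun _ => (1:ℝ)) (σ t x))
        atTop (nhds 0) := by
    rintro x (hx | hx)
    · -- x ∈ SE0 : squeeze between 0 and the E-average
      rw [hSE0] at hx
      refine tendsto_of_tendsto_of_tendsto_of_le_of_le' tendsto_const_nhds hx ?_ ?_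
      · filter_upwards [eventually_ge_atTop (1:ℝ)] with T hT
        have h0T : (0:ℝ) ≤ T := by linarith
        exact mul_nonneg (by positivity)
          (int_bounds (orbit_meas σ hjm hBm x) (fun t => ind_nonneg _ _)
            (fun t => ind_le_one _ _) h0T).1
      · filter_upwards [eventually_ge_atTop (1:ℝ)] with T hT
        have h0T : (0:ℝ) ≤ T := by linarith
        refine mul_le_mul_of_nonneg_left ?_ (by positivity)
        refine intervalIntegral.integral_mono_on h0T
          (ii (orbit_meas σ hjm hBm x) (fun t => ind_nonneg _ _) (fun t => ind_le_one _ _) 0 T)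
          (ii (orbit_meas σ hjm hE x) (fun t => ind_nonneg _ _) (fun t => ind_le_one _ _) 0 T)
          fun t _ => ?_
        exact Set.indicator_le_indicator_of_subset Set.diff_subset (fun _ => zero_le_one) _
    · -- x ∈ SEp : the averages vanish identically
      have hzero : ∀ᶠ T : ℝ in atTop,
          (1 / T) * ∫ t in (0:ℝ)..T, (E \ SEp).indicator (fun _ => (1:ℝ)) (σ t x) = 0 := by
        filter_upwards [eventually_ge_atTop (0:ℝ)] with T hT
        have : (∫ t in (0:ℝ)..T, (E \ SEp).indicator (fun _ => (1:ℝ)) (σ t x)) = 0 := by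
          have : ∀ t ∈ Set.uIcc (0:ℝ) T, (E \ SEp).indicator (fun _ => (1:ℝ)) (σ t x) = 0 := by
            intro t ht
            rw [Set.uIcc_of_le hT] at ht
            have hmem : σ t x ∈ SEp := hinv x hx t ht.1
            exact Set.indicator_of_notMem (fun hc => hc.2 hmem) _
          rw [intervalIntegral.integral_congr this]
          simp
        rw [this, mul_zero]
      exact Tendsto.congr' (by filter_upwards [hzero] with T h using h.symm) tendsto_const_nhds
  -- Step 4 : ergodic theorem applications
  obtain ⟨gE, hgE1, _⟩ := flow_birkhoff ρ σ hσ0 hσadd hjm hmp hE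
  obtain ⟨gB, hgB1, hgB2⟩ := flow_birkhoff ρ σ hσ0 hσadd hjm hmp hBm
  have hfull : ∀ᵐ x ∂ρ, x ∈ SE0 ∪ SEp := by
    refine hgE1.mono fun x hx => ?_
    have hge : 0 ≤ gE x := by
      refine ge_of_tendsto hx ?_
      filter_upwards [eventually_ge_atTop (1:ℝ)] with T hT
      have h0T : (0:ℝ) ≤ T := by linarith
      exact mul_nonneg (by positivity)
        (int_bounds (orbit_meas σ hjm hE x) (fun t => ind_nonneg _ _)
          (fun t => ind_le_one _ _) h0T).1
    rcases eq_or_lt_of_le hge with heq | hlt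
    · left
      rw [hSE0]
      rw [← heq] at hx
      exact hx
    · right
      rw [hSEp]
      exact ⟨gE x, hlt, hx⟩
  have hgB0 : ∀ᵐ x ∂ρ, gB x = 0 := by
    filter_upwards [hgB1, hfull] with x hx1 hx2
    exact tendsto_nhds_unique hx1 (part1 x hx2)
  have hint0 : ∫ x, gB x ∂ρ = 0 := by
    rw [integral_congr_ae (g := fun _ => (0:ℝ)) hgB0]
    simp
  rw [hint0] at hgB2
  have hρ0 : ρ (E \ SEp) = 0 := by
    have := hgB2.symm
    rcases (ENNReal.toReal_eq_zero_iff _).mp this with h | h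
    · exact h
    · exact absurd h (measure_ne_top ρ _)
  exact ⟨Eventually.of_forall part1, hρ0⟩
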